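/- Let V be a Banach space, v ∈ V with ‖v‖ ≤ 1, and δ : V ⊕_1 V → V a linear contraction with δ(v,v) = v, where ‖(v₁,v₂)‖ = (1/2)(‖v₁‖+‖v₂‖). Then there is at most one bounded linear map θ : L^1[0,1] → V satisfying θ(1) = v and θ(γ(f,g)) = δ(θ(f), θ(g)) for all f, g ∈ L^1[0,1], where γ is the juxtaposition map. -/

import Mathlib

open MeasureTheory

local notation "μ01" => MeasureTheory.volume.restrict (Set.Icc (0:ℝ) 1)

open Set ENNReal Filter

lemma mfin (s : Set ℝ) : μ01 s ≠ ∞ := by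
  refine ((measure_mono (subset_univ s)).trans_lt ?_).ne
  rw [Measure.restrict_apply_univ, Real.volume_Icc]
  simp

lemma ae_left {𝕜 : Type*} [RCLike 𝕜] {f F : ℝ → 𝕜} (hf : f =ᵐ[μ01] F) :
    ∀ᵐ x ∂μ01, x < 1/2 → f (2*x) = F (2*x) := by
  rw [Filter.EventuallyEq, ae_iff] at hf
  rw [ae_iff]
  rw [Measure.restrict_apply' measurableSet_Icc] at hf ⊢
  set N := {x | ¬ f x = F x}
  have hsub : {x | ¬(x < 1/2 → f (2*x) = F (2*x))} ∩ Icc 0 1 ⊆ (fun x => 2*x) ⁻¹' (N ∩ Icc 0 1) := by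
    rintro x ⟨hx, hx0, hx1⟩
    push_neg at hx
    obtain ⟨hlt, hne⟩ := hx
    refine ⟨hne, ?_, ?_⟩
    · show (0:ℝ) ≤ 2*x; linarith
    · show (2:ℝ)*x ≤ 1; linarith
  refine le_antisymm ((measure_mono hsub).trans ?_) (zero_le)
  rw [Real.volume_preimage_mul_left two_ne_zero, hf, mul_zero]

lemma ae_right {𝕜 : Type*} [RCLike 𝕜] {f F : ℝ → 𝕜} (hf : f =ᵐ[μ01] F) :
    ∀ᵐ x ∂μ01, ¬ (x < 1/2) → f (2*x-1) = F (2*x-1) := by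
  rw [Filter.EventuallyEq, ae_iff] at hf
  rw [ae_iff]
  rw [Measure.restrict_apply' measurableSet_Icc] at hf ⊢
  set N := {x | ¬ f x = F x}
  have hsub : {x | ¬(¬(x < 1/2) → f (2*x-1) = F (2*x-1))} ∩ Icc 0 1 ⊆
      (fun x => 2*x) ⁻¹' ((fun y => y + (-1)) ⁻¹' (N ∩ Icc 0 1)) := by
    rintro x ⟨hx, hx0, hx1⟩
    push_neg at hx
    obtain ⟨hge, hne⟩ := hx
    have he : 2*x + (-1) = 2*x - 1 := by ring
    refine ⟨?_, ?_, ?_⟩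
    · show ¬ f (2*x + (-1)) = F (2*x + (-1)); rw [he]; exact hne
    · show (0:ℝ) ≤ 2*x + (-1); linarith
    · show (2:ℝ)*x + (-1) ≤ 1; linarith
  refine le_antisymm ((measure_mono hsub).trans ?_) (zero_le)
  rw [Real.volume_preimage_mul_left two_ne_zero, measure_preimage_add_right, hf, mul_zero]

noncomputable def aind (𝕜 : Type*) [RCLike 𝕜] (s : Set ℝ) (hs : MeasurableSet s) : Lp 𝕜 1 μ01 :=
  indicatorConstLp 1 hs (mfin s) 1

lemma aind_coe {𝕜 : Type*} [RCLike 𝕜] {s : Set ℝ} (hs : MeasurableSet s) :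
    ⇑(aind 𝕜 s hs) =ᵐ[μ01] s.indicator (fun _ => (1:𝕜)) := indicatorConstLp_coeFn

lemma aind_union {𝕜 : Type*} [RCLike 𝕜] {s t : Set ℝ} (hs : MeasurableSet s)
    (ht : MeasurableSet t) (h : Disjoint s t) :
    aind 𝕜 (s ∪ t) (hs.union ht) = aind 𝕜 s hs + aind 𝕜 t ht := by
  refine Lp.ext ?_
  filter_upwards [aind_coe (𝕜 := 𝕜) (hs.union ht), Lp.coeFn_add (aind 𝕜 s hs) (aind 𝕜 t ht),
    aind_coe (𝕜 := 𝕜) hs, aind_coe (𝕜 := 𝕜) ht] with x h1 h2 h3 h4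
  rw [h1, h2, Pi.add_apply, h3, h4, Set.indicator_union_of_disjoint h]

lemma aind_norm {𝕜 : Type*} [RCLike 𝕜] {s : Set ℝ} (hs : MeasurableSet s) :
    ‖aind 𝕜 s hs‖ = (μ01 s).toReal := by
  rw [aind, norm_indicatorConstLp one_ne_zero one_ne_top]
  simp
  rfl

lemma aind_empty {𝕜 : Type*} [RCLike 𝕜] : aind 𝕜 ∅ MeasurableSet.empty = 0 := by
  refine Lp.ext ?_
  filter_upwards [aind_coe (𝕜 := 𝕜) MeasurableSet.empty, Lp.coeFn_zero 𝕜 1 μ01] with x h1 h2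
  rw [h1, h2]; simp

lemma aind_Ico01 {𝕜 : Type*} [RCLike 𝕜] :
    ⇑(aind 𝕜 (Ico 0 1) measurableSet_Ico) =ᵐ[μ01] fun _ => (1:𝕜) := by
  have h1 : μ01 {(1:ℝ)} = 0 := by
    rw [Measure.restrict_apply' measurableSet_Icc]
    exact le_antisymm ((measure_mono Set.inter_subset_left).trans (by simp)) (zero_le)
  filter_upwards [aind_coe (𝕜 := 𝕜) (measurableSet_Ico (a := (0:ℝ)) (b := 1)),
    ae_restrict_mem measurableSet_Icc, measure_eq_zero_iff_ae_notMem.mp h1] with x h1 h2 h3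
  rw [h1]
  have : x ∈ Ico (0:ℝ) 1 := ⟨h2.1, lt_of_le_of_ne h2.2 (by simpa using h3)⟩
  simp [this]

section
variable {𝕜 : Type*} [RCLike 𝕜] (γ : Lp 𝕜 1 μ01 × Lp 𝕜 1 μ01 → Lp 𝕜 1 μ01)
    (hγ : ∀ fg : Lp 𝕜 1 μ01 × Lp 𝕜 1 μ01,
      ⇑(γ fg) =ᵐ[μ01] fun x : ℝ => if x < 1/2 then fg.1 (2 * x) else fg.2 (2 * x - 1))

include hγ in
lemma gamma_left {a b : ℝ} (hb : b ≤ 1) :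
    γ (aind 𝕜 (Ico a b) measurableSet_Ico, 0) = aind 𝕜 (Ico (a/2) (b/2)) measurableSet_Ico := by
  refine Lp.ext ?_
  filter_upwards [hγ (aind 𝕜 (Ico a b) measurableSet_Ico, 0),
    ae_left (aind_coe (𝕜 := 𝕜) (measurableSet_Ico (a := a) (b := b))),
    ae_right (Lp.coeFn_zero 𝕜 1 μ01), aind_coe (𝕜 := 𝕜) (measurableSet_Ico (a := a/2) (b := b/2)),
    ae_restrict_mem measurableSet_Icc] with x h1 h2 h3 h4 hx
  rw [h1, h4]
  by_cases hhalf : x < 1/2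
  · simp only [hhalf, if_true]
    rw [h2 hhalf]
    have : (2*x ∈ Ico a b) ↔ (x ∈ Ico (a/2) (b/2)) := by
      simp only [mem_Ico]; constructor <;> rintro ⟨u, v⟩ <;> constructor <;> linarith
    by_cases hm : x ∈ Ico (a/2) (b/2)
    · rw [Set.indicator_of_mem (this.mpr hm), Set.indicator_of_mem hm]
    · rw [Set.indicator_of_notMem (fun h => hm (this.mp h)), Set.indicator_of_notMem hm]
  · simp only [hhalf, if_false]
    rw [h3 hhalf]
    have hm : x ∉ Ico (a/2) (b/2) := by
      rintro ⟨u, v⟩; push_neg at hhalf; linarith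
    rw [Set.indicator_of_notMem hm]
    rfl

include hγ in
lemma gamma_right {a b : ℝ} (ha : 0 ≤ a) :
    γ (0, aind 𝕜 (Ico a b) measurableSet_Ico)
      = aind 𝕜 (Ico (a/2 + 1/2) (b/2 + 1/2)) measurableSet_Ico := by
  refine Lp.ext ?_
  filter_upwards [hγ (0, aind 𝕜 (Ico a b) measurableSet_Ico),
    ae_right (aind_coe (𝕜 := 𝕜) (measurableSet_Ico (a := a) (b := b))),
    ae_left (Lp.coeFn_zero 𝕜 1 μ01),
    aind_coe (𝕜 := 𝕜) (measurableSet_Ico (a := a/2+1/2) (b := b/2+1/2)),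
    ae_restrict_mem measurableSet_Icc] with x h1 h2 h3 h4 hx
  rw [h1, h4]
  by_cases hhalf : x < 1/2
  · simp only [hhalf, if_true]
    rw [h3 hhalf]
    have hm : x ∉ Ico (a/2+1/2) (b/2+1/2) := by
      rintro ⟨u, v⟩; linarith
    rw [Set.indicator_of_notMem hm]
    rfl
  · simp only [hhalf, if_false]
    rw [h2 hhalf]
    have : (2*x-1 ∈ Ico a b) ↔ (x ∈ Ico (a/2+1/2) (b/2+1/2)) := by
      simp only [mem_Ico]; constructor <;> rintro ⟨u, v⟩ <;> constructor <;> linarith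
    by_cases hm : x ∈ Ico (a/2+1/2) (b/2+1/2)
    · rw [Set.indicator_of_mem (this.mpr hm), Set.indicator_of_mem hm]
    · rw [Set.indicator_of_notMem (fun h => hm (this.mp h)), Set.indicator_of_notMem hm]
end

lemma aind_congr {𝕜 : Type*} [RCLike 𝕜] {s t : Set ℝ} (h : s = t) (hs : MeasurableSet s)
    (ht : MeasurableSet t) : aind 𝕜 s hs = aind 𝕜 t ht := by subst h; rfl

/-- given a Banach space `V`, a point `v` of its unit ball and a
linear contraction `δ : V ⊕₁ V → V` with `δ(v,v) = v`, there is at most one bounded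
linear map `θ : L¹[0,1] → V` with `θ(1) = v` and `θ(γ(f,g)) = δ(θf, θg)`. -/
theorem stmt_2 {𝕜 V : Type*} [RCLike 𝕜] [NormedAddCommGroup V] [NormedSpace 𝕜 V]
    [CompleteSpace V]
    (v : V) (hv : ‖v‖ ≤ 1)
    (δ : V × V →ₗ[𝕜] V) (hδ : ∀ a : V × V, ‖δ a‖ ≤ (1/2) * (‖a.1‖ + ‖a.2‖))
    (hδv : δ (v, v) = v)
    (one : Lp 𝕜 1 μ01) (hone : ⇑one =ᵐ[μ01] fun _ => 1)
    (γ : Lp 𝕜 1 μ01 × Lp 𝕜 1 μ01 → Lp 𝕜 1 μ01)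
    (hγ : ∀ fg : Lp 𝕜 1 μ01 × Lp 𝕜 1 μ01,
      ⇑(γ fg) =ᵐ[μ01] fun x : ℝ => if x < 1/2 then fg.1 (2 * x) else fg.2 (2 * x - 1))
    (θ θ' : Lp 𝕜 1 μ01 →L[𝕜] V)
    (hθ1 : θ one = v) (hθγ : ∀ f g : Lp 𝕜 1 μ01, θ (γ (f, g)) = δ (θ f, θ g))
    (hθ'1 : θ' one = v) (hθ'γ : ∀ f g : Lp 𝕜 1 μ01, θ' (γ (f, g)) = δ (θ' f, θ' g)) :
    θ = θ' := by
  classical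
  -- dyadic intervals
  have hdy : ∀ n k : ℕ, k < 2^n →
      θ (aind 𝕜 (Ico ((k:ℝ)/2^n) (((k:ℝ)+1)/2^n)) measurableSet_Ico)
        = θ' (aind 𝕜 (Ico ((k:ℝ)/2^n) (((k:ℝ)+1)/2^n)) measurableSet_Ico) := by
    intro n
    induction n with
    | zero =>
      intro k hk
      interval_cases k
      have e : Ico (((0:ℕ):ℝ)/2^0) ((((0:ℕ):ℝ)+1)/2^0) = Ico (0:ℝ) 1 := by congr 1 <;> norm_num
      rw [aind_congr e measurableSet_Ico measurableSet_Ico]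
      have h01 : aind 𝕜 (Ico (0:ℝ) 1) measurableSet_Ico = one :=
        Lp.ext (aind_Ico01.trans hone.symm)
      rw [h01, hθ1, hθ'1]
    | succ n ih =>
      intro k hk
      rcases lt_or_ge k (2^n) with hk' | hk'
      · have hb : ((k:ℝ)+1)/2^n ≤ 1 := by
          rw [div_le_one (by positivity)]
          have : (k:ℝ) + 1 ≤ (2:ℝ)^n := by exact_mod_cast Nat.succ_le_of_lt hk'
          simpa using this
        have hg := gamma_left γ hγ (a := (k:ℝ)/2^n) (b := ((k:ℝ)+1)/2^n) hb
        have e : Ico (((k:ℝ)/2^n)/2) ((((k:ℝ)+1)/2^n)/2)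
            = Ico ((k:ℝ)/2^(n+1)) (((k:ℝ)+1)/2^(n+1)) := by
          have e1 : ((k:ℝ)/2^n)/2 = (k:ℝ)/2^(n+1) := by ring
          have e2 : (((k:ℝ)+1)/2^n)/2 = ((k:ℝ)+1)/2^(n+1) := by ring
          rw [e1, e2]
        have hg' := hg.trans (aind_congr e measurableSet_Ico measurableSet_Ico)
        rw [← hg', hθγ, hθ'γ, ih k hk', map_zero θ, map_zero θ']
      · set j := k - 2^n with hj
        have hjk : k = 2^n + j := by omega
        have hjlt : j < 2^n := by omega
        have ha : (0:ℝ) ≤ (j:ℝ)/2^n := by positivity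
        have hg := gamma_right γ hγ (a := (j:ℝ)/2^n) (b := ((j:ℝ)+1)/2^n) ha
        have e : Ico (((j:ℝ)/2^n)/2 + 1/2) ((((j:ℝ)+1)/2^n)/2 + 1/2)
            = Ico ((k:ℝ)/2^(n+1)) (((k:ℝ)+1)/2^(n+1)) := by
          have h2 : (2:ℝ)^n ≠ 0 := by positivity
          have e1 : ((j:ℝ)/2^n)/2 + 1/2 = (k:ℝ)/2^(n+1) := by
            rw [hjk]; push_cast; field_simp; ring
          have e2 : (((j:ℝ)+1)/2^n)/2 + 1/2 = ((k:ℝ)+1)/2^(n+1) := by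
            rw [hjk]; push_cast; field_simp; ring
          rw [e1, e2]
        have hg' := hg.trans (aind_congr e measurableSet_Ico measurableSet_Ico)
        rw [← hg', hθγ, hθ'γ, ih j hjlt, map_zero θ, map_zero θ']
  -- initial segments with dyadic endpoints
  have hpre : ∀ n k : ℕ, k ≤ 2^n →
      θ (aind 𝕜 (Ico 0 ((k:ℝ)/2^n)) measurableSet_Ico)
        = θ' (aind 𝕜 (Ico 0 ((k:ℝ)/2^n)) measurableSet_Ico) := by
    intro n k
    induction k with
    | zero =>
      intro _
      have e : Ico (0:ℝ) (((0:ℕ):ℝ)/2^n) = (∅ : Set ℝ) := by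
        rw [show ((0:ℕ):ℝ)/2^n = 0 by norm_num, Set.Ico_self]
      rw [aind_congr e measurableSet_Ico MeasurableSet.empty, aind_empty, map_zero, map_zero]
    | succ k ih =>
      intro hk
      have hk1 : k ≤ 2^n := by omega
      have h1 : (0:ℝ) ≤ (k:ℝ)/2^n := by positivity
      have h2 : (k:ℝ)/2^n ≤ ((k:ℝ)+1)/2^n :=
        (div_le_div_iff_of_pos_right (show (0:ℝ) < 2^n by positivity)).mpr (by linarith)
      have hset : Ico (0:ℝ) ((k:ℝ)/2^n) ∪ Ico ((k:ℝ)/2^n) (((k:ℝ)+1)/2^n)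
          = Ico (0:ℝ) (((k:ℝ)+1)/2^n) := Set.Ico_union_Ico_eq_Ico h1 h2
      have hdisj : Disjoint (Ico (0:ℝ) ((k:ℝ)/2^n)) (Ico ((k:ℝ)/2^n) (((k:ℝ)+1)/2^n)) :=
        Set.disjoint_left.2 fun x hx hx' => absurd hx.2 (not_lt.2 hx'.1)
      have hsum : aind 𝕜 (Ico (0:ℝ) (((k:ℝ)+1)/2^n)) measurableSet_Ico
          = aind 𝕜 (Ico (0:ℝ) ((k:ℝ)/2^n)) measurableSet_Ico
            + aind 𝕜 (Ico ((k:ℝ)/2^n) (((k:ℝ)+1)/2^n)) measurableSet_Ico :=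
        (aind_congr hset.symm measurableSet_Ico (measurableSet_Ico.union measurableSet_Ico)).trans
          (aind_union _ _ hdisj)
      have ecast : Ico (0:ℝ) (((k+1:ℕ):ℝ)/2^n) = Ico (0:ℝ) (((k:ℝ)+1)/2^n) := by
        congr 1
        push_cast
        ring
      rw [aind_congr ecast measurableSet_Ico measurableSet_Ico, hsum, map_add, map_add,
        ih hk1, hdy n k hk]
  -- initial segments with arbitrary endpoint in [0,1]
  have hico : ∀ t : ℝ, 0 ≤ t → t ≤ 1 →
      θ (aind 𝕜 (Ico 0 t) measurableSet_Ico) = θ' (aind 𝕜 (Ico 0 t) measurableSet_Ico) := by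
    intro t ht0 ht1
    have h2pos : ∀ n : ℕ, (0:ℝ) < 2^n := fun n => by positivity
    have hu0 : ∀ n : ℕ, (0:ℝ) ≤ (⌊t * 2^n⌋₊ : ℝ)/2^n := fun n => by positivity
    have hut : ∀ n : ℕ, (⌊t * 2^n⌋₊ : ℝ)/2^n ≤ t := by
      intro n
      rw [div_le_iff₀ (h2pos n)]
      exact Nat.floor_le (by positivity)
    have hub : ∀ n : ℕ, t - (⌊t * 2^n⌋₊ : ℝ)/2^n ≤ (1/2)^n := by
      intro n
      have hfl := Nat.lt_floor_add_one (t * 2^n)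
      have h12 : ((1:ℝ)/2)^n = 1/2^n := by rw [div_pow, one_pow]
      rw [h12, sub_le_iff_le_add, ← add_div, le_div_iff₀ (h2pos n)]
      linarith
    have hkle : ∀ n : ℕ, ⌊t * 2^n⌋₊ ≤ 2^n := by
      intro n
      have hle : t * 2^n ≤ ((2^n : ℕ) : ℝ) := by
        push_cast
        nlinarith [h2pos n]
      exact (Nat.floor_mono hle).trans (le_of_eq (Nat.floor_natCast _))
    have hsplit : ∀ n : ℕ, aind 𝕜 (Ico (0:ℝ) t) measurableSet_Ico
        = aind 𝕜 (Ico (0:ℝ) ((⌊t * 2^n⌋₊ : ℝ)/2^n)) measurableSet_Ico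
          + aind 𝕜 (Ico ((⌊t * 2^n⌋₊ : ℝ)/2^n) t) measurableSet_Ico := by
      intro n
      refine (aind_congr (Set.Ico_union_Ico_eq_Ico (hu0 n) (hut n)).symm measurableSet_Ico
        (measurableSet_Ico.union measurableSet_Ico)).trans
        (aind_union _ _ (Set.disjoint_left.2 fun x hx hx' => absurd hx.2 (not_lt.2 hx'.1)))
    have hnorm : ∀ n : ℕ, ‖aind 𝕜 (Ico (0:ℝ) t) measurableSet_Ico
        - aind 𝕜 (Ico (0:ℝ) ((⌊t * 2^n⌋₊ : ℝ)/2^n)) measurableSet_Ico‖ ≤ (1/2)^n := by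
      intro n
      rw [hsplit n, add_sub_cancel_left, aind_norm]
      have h1 : μ01 (Ico ((⌊t * 2^n⌋₊ : ℝ)/2^n) t) ≤ ENNReal.ofReal (t - (⌊t * 2^n⌋₊ : ℝ)/2^n) := by
        rw [Measure.restrict_apply' measurableSet_Icc]
        exact (measure_mono Set.inter_subset_left).trans (le_of_eq Real.volume_Ico)
      have h2 := ENNReal.toReal_le_of_le_ofReal (by linarith [hut n]) h1
      exact h2.trans (hub n)
    have htend : Tendsto (fun n => aind 𝕜 (Ico (0:ℝ) ((⌊t * 2^n⌋₊ : ℝ)/2^n)) measurableSet_Ico)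
        atTop (nhds (aind 𝕜 (Ico (0:ℝ) t) measurableSet_Ico)) := by
      rw [tendsto_iff_norm_sub_tendsto_zero]
      refine squeeze_zero (g := fun n => (1/2:ℝ)^n) (fun n => norm_nonneg _) (fun n => ?_) ?_
      · rw [norm_sub_rev]; exact hnorm n
      · exact tendsto_pow_atTop_nhds_zero_of_lt_one (by norm_num) (by norm_num)
    exact (isClosed_eq θ.continuous θ'.continuous).mem_of_tendsto htend
      (Filter.Eventually.of_forall (fun n => hpre n _ (hkle n)))
  
  -- all measurable sets
  have hind := MeasurableSpace.induction_on_inter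
    (C := fun s hs => θ (aind 𝕜 s hs) = θ' (aind 𝕜 s hs))
    (BorelSpace.measurable_eq.trans (borel_eq_generateFrom_Iio ℝ)) isPiSystem_Iio
    ?empty ?basic ?compl ?union
  case empty =>
    rw [aind_empty, map_zero, map_zero]
  case basic =>
    rintro t ⟨a, rfl⟩
    have hs : MeasurableSet (Iio a) := measurableSet_Iio
    set b := max 0 (min a 1) with hb
    have hb0 : (0:ℝ) ≤ b := le_max_left _ _
    have hb1 : b ≤ 1 := max_le (by norm_num) (min_le_right _ _)
    have h1 : μ01 {(1:ℝ)} = 0 := by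
      rw [Measure.restrict_apply' measurableSet_Icc]
      exact le_antisymm ((measure_mono Set.inter_subset_left).trans (by simp)) (zero_le)
    have hae : aind 𝕜 (Iio a) hs = aind 𝕜 (Ico 0 b) measurableSet_Ico := by
      refine Lp.ext ?_
      filter_upwards [aind_coe (𝕜 := 𝕜) hs,
        aind_coe (𝕜 := 𝕜) (measurableSet_Ico (a := (0:ℝ)) (b := b)),
        ae_restrict_mem measurableSet_Icc, measure_eq_zero_iff_ae_notMem.mp h1] with x hx1 hx2 hx hne
      rw [hx1, hx2]
      have hx1' : x < 1 := lt_of_le_of_ne hx.2 (by simpa using hne)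
      have hiff : x ∈ Iio a ↔ x ∈ Ico 0 b := by
        simp only [Set.mem_Iio, Set.mem_Ico]
        have : x < b ↔ x < 0 ∨ x < a ∧ x < 1 := by rw [hb, lt_max_iff, lt_min_iff]
        rw [this]
        constructor
        · intro h; exact ⟨hx.1, Or.inr ⟨h, hx1'⟩⟩
        · rintro ⟨_, h | ⟨h, _⟩⟩
          · exact absurd h (not_lt.2 hx.1)
          · exact h
      by_cases hm : x ∈ Iio a
      · rw [Set.indicator_of_mem hm, Set.indicator_of_mem (hiff.mp hm)]
      · rw [Set.indicator_of_notMem hm, Set.indicator_of_notMem (fun h => hm (hiff.mpr h))]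
    rw [hae]
    exact hico b hb0 hb1
  case compl =>
    intro t ht hC
    have hs := ht.compl
    have hsub : aind 𝕜 tᶜ hs = one - aind 𝕜 t ht := by
      refine Lp.ext ?_
      filter_upwards [aind_coe (𝕜 := 𝕜) hs, Lp.coeFn_sub one (aind 𝕜 t ht), hone,
        aind_coe (𝕜 := 𝕜) ht] with x h1 h2 h3 h4
      rw [h1, h2, Pi.sub_apply, h3, h4]
      by_cases hxt : x ∈ t
      · rw [Set.indicator_of_notMem (by simpa using hxt), Set.indicator_of_mem hxt]; simp
      · rw [Set.indicator_of_mem (by simpa using hxt), Set.indicator_of_notMem hxt]; simp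
    rw [hsub, map_sub, map_sub, hθ1, hθ'1, hC]
  case union =>
    intro f hdisj hmeas hCf
    have hs := MeasurableSet.iUnion hmeas
    set S : ℕ → Set ℝ := fun n => ⋃ i, ⋃ (_ : i < n), f i with hS
    have hSm : ∀ n, MeasurableSet (S n) :=
      fun n => MeasurableSet.biUnion (Set.to_countable _) fun i _ => hmeas i
    have hSmono : Monotone S := fun m n hmn =>
      Set.iUnion₂_subset fun i hi => Set.subset_biUnion_of_mem (lt_of_lt_of_le hi hmn)
    have hSsub : ∀ n, S n ⊆ ⋃ i, f i :=
      fun n => Set.iUnion₂_subset fun i _ => Set.subset_iUnion f i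
    have hSU : (⋃ n, S n) = ⋃ i, f i := by
      apply Set.Subset.antisymm
      · exact Set.iUnion_subset fun n => hSsub n
      · refine Set.iUnion_subset fun i x hx => ?_
        exact Set.mem_iUnion.2 ⟨i+1, Set.mem_biUnion (Nat.lt_succ_self i) hx⟩
    have hSE : ∀ n, θ (aind 𝕜 (S n) (hSm n)) = θ' (aind 𝕜 (S n) (hSm n)) := by
      intro n
      induction n with
      | zero =>
        have e : S 0 = (∅ : Set ℝ) := by simp [hS]
        rw [aind_congr e (hSm 0) MeasurableSet.empty, aind_empty, map_zero, map_zero]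
      | succ n ihn =>
        have e : S (n+1) = S n ∪ f n := by
          rw [hS]; exact biUnion_lt_succ f n
        have hd : Disjoint (S n) (f n) := by
          rw [Set.disjoint_left]
          intro x hx hxn
          obtain ⟨i, hi, hxi⟩ := Set.mem_iUnion₂.mp hx
          exact Set.disjoint_left.1 (hdisj (Nat.ne_of_lt hi)) hxi hxn
        rw [aind_congr e (hSm (n+1)) ((hSm n).union (hmeas n)), aind_union _ _ hd,
          map_add, map_add, ihn, hCf n]
    have hsplit : ∀ n, aind 𝕜 (⋃ i, f i) hs
        = aind 𝕜 (S n) (hSm n) + aind 𝕜 ((⋃ i, f i) \ S n) (hs.diff (hSm n)) := by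
      intro n
      refine (aind_congr (Set.union_diff_cancel (hSsub n)).symm hs
        ((hSm n).union (hs.diff (hSm n)))).trans (aind_union _ _ disjoint_sdiff_self_right)
    have htend0 : Tendsto (fun n => μ01 ((⋃ i, f i) \ S n)) atTop (nhds 0) := by
      have h := tendsto_measure_iInter_atTop (μ := μ01)
        (s := fun n => (⋃ i, f i) \ S n)
        (fun n => (hs.diff (hSm n)).nullMeasurableSet)
        (fun m n hmn => Set.diff_subset_diff_right (hSmono hmn)) ⟨0, mfin _⟩
      have he : (⋂ n, (⋃ i, f i) \ S n) = (∅ : Set ℝ) := by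
        rw [← Set.diff_iUnion, hSU, Set.diff_self]
      rw [he, measure_empty] at h
      exact h
    have htendR : Tendsto (fun n => (μ01 ((⋃ i, f i) \ S n)).toReal) atTop (nhds 0) := by
      have := (ENNReal.tendsto_toReal (ENNReal.zero_ne_top)).comp htend0
      simpa [Function.comp_def] using this
    have htend : Tendsto (fun n => aind 𝕜 (S n) (hSm n)) atTop
        (nhds (aind 𝕜 (⋃ i, f i) hs)) := by
      rw [tendsto_iff_norm_sub_tendsto_zero]
      refine squeeze_zero (g := fun n => (μ01 ((⋃ i, f i) \ S n)).toReal)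
        (fun n => norm_nonneg _) (fun n => ?_) htendR
      rw [norm_sub_rev, hsplit n, add_sub_cancel_left, aind_norm]
    exact (isClosed_eq θ.continuous θ'.continuous).mem_of_tendsto htend
      (Filter.Eventually.of_forall hSE)
  have hall : ∀ (s : Set ℝ) (hs : MeasurableSet s),
      θ (aind 𝕜 s hs) = θ' (aind 𝕜 s hs) := fun s hs => hind s hs
  -- conclude by density of simple functions
  haveI : Fact ((1:ℝ≥0∞) ≤ 1) := ⟨le_refl _⟩
  refine ContinuousLinearMap.ext fun f => ?_
  refine Lp.induction (E := 𝕜) (μ := μ01) (p := 1) one_ne_top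
    (fun f => θ f = θ' f) ?_ ?_ ?_ f
  · intro c s hs hμs
    rw [Lp.simpleFunc.coe_indicatorConst]
    have hsm : indicatorConstLp 1 hs hμs.ne c = c • aind 𝕜 s hs := by
      refine Lp.ext ?_
      filter_upwards [indicatorConstLp_coeFn (p := 1) (hs := hs) (hμs := hμs.ne) (c := c),
        Lp.coeFn_smul c (aind 𝕜 s hs), aind_coe (𝕜 := 𝕜) hs] with x h1 h2 h3
      rw [h1, h2, Pi.smul_apply, h3]
      by_cases hx : x ∈ s
      · rw [Set.indicator_of_mem hx, Set.indicator_of_mem hx]; simp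
      · rw [Set.indicator_of_notMem hx, Set.indicator_of_notMem hx]; simp
    rw [hsm, θ.map_smul, θ'.map_smul, hall s hs]
  · intro f g hf hg hfg h1 h2
    rw [map_add, map_add, h1, h2]
  · exact isClosed_eq θ.continuous θ'.continuous
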